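/- Let φ be an admissible error function. Then for every φ-Jensen convex function f : D → ℝ, all positive integers n, k, and all x, y ∈ D: f((n·x + k·y)/(n + k)) ≤ (n/(n+k))·f(x) + (k/(n+k))·f(y) + k·n·φ*((x − y)/(n + k)). In particular, φ* is real-valued (never −∞), every φ-Jensen convex function is also φ*-Jensen convex, and φ* is an admissible error function. -/

import Mathlib

noncomputable section

/-- The distance of a real number to the set of integers. -/
noncomputable def dZ (x : ℝ) : ℝ := ⨅ k : ℤ, |x - (k : ℝ)|

variable {X : Type*} [AddCommGroup X] [Module ℝ X]

/-- The difference set `D_Δ = {x - y : x, y ∈ D}`. -/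
def diffSet (D : Set X) : Set X := {u | ∃ x ∈ D, ∃ y ∈ D, u = x - y}

/-- The half difference set `(1/2)·D_Δ`. -/
def halfDiff (D : Set X) : Set X := {u | ∃ x ∈ D, ∃ y ∈ D, u = (2⁻¹ : ℝ) • (x - y)}

/-- `f` is `φ`-Jensen convex on `D`. -/
def JCW (D : Set X) (φ : X → ℝ) (f : X → ℝ) : Prop :=
  ∀ x ∈ D, ∀ y ∈ D,
    f ((2⁻¹ : ℝ) • (x + y)) ≤ 2⁻¹ * f x + 2⁻¹ * f y + φ ((2⁻¹ : ℝ) • (x - y))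

/-- `φ` is an admissible error function on `(1/2)·D_Δ`:
it is even there, vanishes at `0`, and admits a `φ`-Jensen convex function. -/
def Admissible (D : Set X) (φ : X → ℝ) : Prop :=
  (∀ u ∈ halfDiff D, φ (-u) = φ u) ∧ φ 0 = 0 ∧ ∃ f : X → ℝ, JCW D φ f

/-- `φ*(u) = inf_{m ∈ ℕ, m ≥ 1} m² · φ(u/m)`, valued in `[-∞, ∞)` viewed inside `EReal`. -/
noncomputable def phiStar (φ : X → ℝ) (u : X) : EReal :=
  ⨅ m : ℕ+, ((((m : ℕ) : ℝ) ^ 2 * φ ((1 / ((m : ℕ) : ℝ)) • u) : ℝ) : EReal)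

/-- The real-valued version of `φ*` (equal to `φ*` wherever `φ*` is finite). -/
noncomputable def phiStarR (φ : X → ℝ) (u : X) : ℝ := (phiStar φ u).toReal

/-- The extended error function
`E[φ](λ,u) = sup { f(λx+(1-λ)y) - λf(x) - (1-λ)f(y) : f φ-Jensen convex, x,y ∈ D, x-y = u }`. -/
noncomputable def Eerr (D : Set X) (φ : X → ℝ) (l : ℝ) (u : X) : EReal :=
  sSup {c : EReal | ∃ f : X → ℝ, JCW D φ f ∧ ∃ x ∈ D, ∃ y ∈ D, x - y = u ∧
    c = ((f (l • x + (1 - l) • y) - l * f x - (1 - l) * f y : ℝ) : EReal)}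

private lemma monoStep {N : ℕ} {δ : ℕ → ℝ}
    (h : ∀ i, i + 1 < N → δ i ≤ δ (i + 1)) :
    ∀ a b, a ≤ b → b < N → δ a ≤ δ b := by
  intro a b hab hbN
  induction b with
  | zero => simp [Nat.le_zero.mp hab]
  | succ b ih =>
    rcases Nat.lt_or_ge a (b + 1) with h1 | h1
    · exact le_trans (ih (Nat.lt_succ_iff.mp h1) (by omega)) (h b hbN)
    · have : a = b + 1 := le_antisymm hab h1
      simp [this]

private lemma maxPrinciple {N : ℕ} (hN : 0 < N) (d : ℕ → ℝ)
    (h0 : d 0 = 0) (hNe : d N = 0)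
    (h : ∀ j, 1 ≤ j → j < N → 2 * d j ≤ d (j - 1) + d (j + 1)) :
    ∀ j ≤ N, d j ≤ 0 := by
  set δ : ℕ → ℝ := fun i => d (i + 1) - d i with hδ
  have hstep : ∀ i, i + 1 < N → δ i ≤ δ (i + 1) := by
    intro i hi
    have := h (i + 1) (by omega) hi
    simp only [hδ, Nat.add_sub_cancel] at *
    linarith
  have hsum : ∀ j, ∑ i ∈ Finset.range j, δ i = d j := by
    intro j
    rw [hδ, Finset.sum_range_sub d j, h0, sub_zero]
  intro j hj
  rcases eq_or_lt_of_le hj with rfl | hjN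
  · exact le_of_eq hNe
  · rw [← hsum j]
    have hs : ∑ i ∈ Finset.range j, δ i ≤ (j : ℝ) * δ j := by
      have := Finset.sum_le_card_nsmul (Finset.range j) δ (δ j)
        (fun i hi => monoStep hstep i j (Finset.mem_range.mp hi).le hjN)
      simpa [nsmul_eq_mul] using this
    have ht : ((N : ℝ) - j) * δ j ≤ ∑ i ∈ Finset.Ico j N, δ i := by
      have := Finset.card_nsmul_le_sum (Finset.Ico j N) δ (δ j)
        (fun i hi => monoStep hstep j i (Finset.mem_Ico.mp hi).1 (Finset.mem_Ico.mp hi).2)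
      rw [Nat.card_Ico] at this
      have hc : ((N - j : ℕ) : ℝ) = (N : ℝ) - j := by
        rw [Nat.cast_sub hjN.le]
      simpa [nsmul_eq_mul, hc] using this
    have htot : ∑ i ∈ Finset.range j, δ i + ∑ i ∈ Finset.Ico j N, δ i = 0 := by
      have : ∑ i ∈ Finset.range j, δ i + ∑ i ∈ Finset.Ico j N, δ i
          = ∑ i ∈ Finset.range N, δ i := Finset.sum_range_add_sum_Ico δ hjN.le
      rw [this, hsum, hNe]
    nlinarith [hs, ht, htot, (by exact_mod_cast hN : (0:ℝ) < N),
      (by exact_mod_cast hjN : (j:ℝ) < N), (Nat.cast_nonneg j : (0:ℝ) ≤ j)]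

private lemma ratIneq {X : Type*} [AddCommGroup X] [Module ℝ X] {D : Set X}
    (hD : Convex ℝ D) {φ f : X → ℝ} (hf : JCW D φ f)
    (n k : ℕ) (hn : 0 < n) (hk : 0 < k) {x y : X} (hx : x ∈ D) (hy : y ∈ D) :
    f (((n : ℝ) / ((n : ℝ) + (k : ℝ))) • x + ((k : ℝ) / ((n : ℝ) + (k : ℝ))) • y) ≤
      (n : ℝ) / ((n : ℝ) + (k : ℝ)) * f x + (k : ℝ) / ((n : ℝ) + (k : ℝ)) * f y +
      (k : ℝ) * (n : ℝ) * φ ((1 / ((n : ℝ) + (k : ℝ))) • (x - y)) := by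
  set N : ℕ := n + k with hN
  set Nr : ℝ := (n : ℝ) + (k : ℝ) with hNr
  have hcast : ((N : ℕ) : ℝ) = Nr := by push_cast [hN]; ring
  have hNr0 : (0 : ℝ) < Nr := by positivity
  set u : X := (1 / Nr) • (x - y) with hu
  set z : ℕ → X := fun j => ((j : ℝ) / Nr) • x + (1 - (j : ℝ) / Nr) • y with hz
  have hzD : ∀ j ≤ N, z j ∈ D := by
    intro j hj
    have hj' : (j : ℝ) ≤ Nr := by rw [← hcast]; exact_mod_cast hj
    exact hD hx hy (div_nonneg (Nat.cast_nonneg j) hNr0.le)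
      (by rw [sub_nonneg, div_le_one hNr0]; exact hj') (by ring)
  set c : ℕ → ℝ := fun j => f (z j) with hc
  set d : ℕ → ℝ := fun j =>
    Nr * c j - (j : ℝ) * c N - (Nr - (j : ℝ)) * c 0 - (j : ℝ) * (Nr - (j : ℝ)) * Nr * φ u
    with hd
  have h0 : d 0 = 0 := by simp [hd]
  have hNe : d N = 0 := by simp [hd, hcast]
  have hsub : ∀ j, 1 ≤ j → j < N → 2 * d j ≤ d (j - 1) + d (j + 1) := by
    intro j h1 hjN
    have hcj : ((j - 1 : ℕ) : ℝ) = (j : ℝ) - 1 := by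
      have := Nat.cast_sub (R := ℝ) h1; simpa using this
    have hmid : (2⁻¹ : ℝ) • (z (j + 1) + z (j - 1)) = z j := by
      simp only [hz, hcj, Nat.cast_add, Nat.cast_one]
      match_scalars <;> field_simp <;> ring
    have hdif : (2⁻¹ : ℝ) • (z (j + 1) - z (j - 1)) = u := by
      simp only [hz, hu, hcj, Nat.cast_add, Nat.cast_one]
      match_scalars <;> field_simp <;> ring
    have key := hf (z (j + 1)) (hzD (j + 1) (by omega)) (z (j - 1)) (hzD (j - 1) (by omega))
    rw [hmid, hdif] at key
    have key2 : 2 * Nr * c j ≤ Nr * c (j + 1) + Nr * c (j - 1) + 2 * Nr * φ u := by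
      have : c j ≤ 2⁻¹ * c (j + 1) + 2⁻¹ * c (j - 1) + φ u := key
      nlinarith [this, hNr0]
    simp only [hd, hcj, Nat.cast_add, Nat.cast_one]
    nlinarith [key2]
  have hdn := maxPrinciple (by omega : 0 < N) d h0 hNe hsub n (by omega)
  have hcN : c N = f x := by
    have : z N = x := by
      rw [hz]; simp only [hcast]
      rw [div_self hNr0.ne', one_smul, sub_self, zero_smul, add_zero]
    show f (z N) = f x
    rw [this]
  have hc0 : c 0 = f y := by
    have : z 0 = y := by simp [hz]
    show f (z 0) = f y
    rw [this]
  have hzn : ((n : ℝ) / Nr) • x + ((k : ℝ) / Nr) • y = z n := by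
    have hkk : (k : ℝ) / Nr = 1 - (n : ℝ) / Nr := by
      rw [eq_sub_iff_add_eq, ← add_div,
        show (k : ℝ) + (n : ℝ) = Nr by rw [hNr]; ring]
      exact div_self hNr0.ne'
    show _ = ((n : ℝ) / Nr) • x + (1 - (n : ℝ) / Nr) • y
    rw [hkk]
  rw [hzn]
  have hNk : Nr - (n : ℝ) = (k : ℝ) := by rw [hNr]; ring
  have hdn' : Nr * c n ≤ (n : ℝ) * f x + (k : ℝ) * f y + (n : ℝ) * (k : ℝ) * Nr * φ u := by
    simp only [hd, hcN, hc0, hNk] at hdn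
    linarith
  have h5 : c n ≤ ((n : ℝ) * f x + (k : ℝ) * f y + (n : ℝ) * (k : ℝ) * Nr * φ u) / Nr :=
    (le_div_iff₀' hNr0).mpr hdn'
  calc f (z n) = c n := rfl
    _ ≤ _ := h5
    _ = (n : ℝ) / Nr * f x + (k : ℝ) / Nr * f y + (k : ℝ) * (n : ℝ) * φ u := by
        field_simp

private lemma ratIneq' {X : Type*} [AddCommGroup X] [Module ℝ X] {D : Set X}
    (hD : Convex ℝ D) {φ f : X → ℝ} (hf : JCW D φ f)
    (n k m : ℕ) (hn : 0 < n) (hk : 0 < k) (hm : 0 < m) {x y : X} (hx : x ∈ D) (hy : y ∈ D) :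
    f (((n : ℝ) / ((n : ℝ) + (k : ℝ))) • x + ((k : ℝ) / ((n : ℝ) + (k : ℝ))) • y) ≤
      (n : ℝ) / ((n : ℝ) + (k : ℝ)) * f x + (k : ℝ) / ((n : ℝ) + (k : ℝ)) * f y +
      (k : ℝ) * (n : ℝ) *
        ((m : ℝ) ^ 2 * φ ((1 / (m : ℝ)) • ((1 / ((n : ℝ) + (k : ℝ))) • (x - y)))) := by
  have H := ratIneq hD hf (n * m) (k * m) (by positivity) (by positivity) hx hy
  have hNr0 : (0 : ℝ) < (n : ℝ) + (k : ℝ) := by positivity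
  have hm0 : (0 : ℝ) < (m : ℝ) := by exact_mod_cast hm
  have e1 : ((n * m : ℕ) : ℝ) / ((n * m : ℕ) + ((k * m : ℕ) : ℝ))
      = (n : ℝ) / ((n : ℝ) + (k : ℝ)) := by
    push_cast
    rw [div_eq_div_iff (by positivity) hNr0.ne']
    ring
  have e2 : ((k * m : ℕ) : ℝ) / ((n * m : ℕ) + ((k * m : ℕ) : ℝ))
      = (k : ℝ) / ((n : ℝ) + (k : ℝ)) := by
    push_cast
    rw [div_eq_div_iff (by positivity) hNr0.ne']
    ring
  have e3 : (1 / (((n * m : ℕ) : ℝ) + ((k * m : ℕ) : ℝ))) • (x - y) =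
      (1 / (m : ℝ)) • ((1 / ((n : ℝ) + (k : ℝ))) • (x - y)) := by
    rw [smul_smul]
    congr 1
    push_cast
    field_simp
  rw [e1, e2, e3] at H
  calc f _ ≤ _ := H
    _ = _ := by push_cast; ring

private lemma smul_mem_halfDiff {X : Type*} [AddCommGroup X] [Module ℝ X] {D : Set X}
    (hD : Convex ℝ D) {u : X} (hu : u ∈ halfDiff D) {t : ℝ} (h0 : 0 ≤ t) (h1 : t ≤ 1) :
    t • u ∈ halfDiff D := by
  obtain ⟨x, hx, y, hy, rfl⟩ := hu
  refine ⟨t • x + (1 - t) • y, hD hx hy h0 (by linarith) (by ring), y, hy, ?_⟩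
  module

/-- the sharpened rational convexity inequality with `φ*`; in particular
`φ*` is real-valued on `(1/2)·D_Δ`, every `φ`-Jensen convex function is `φ*`-Jensen convex,
and `φ*` is an admissible error function. -/
theorem stmt12 {X : Type*} [AddCommGroup X] [Module ℝ X] (D : Set X)
    (hD : Convex ℝ D) (hne : D.Nonempty) (φ : X → ℝ) (hφ : Admissible D φ) :
    (∀ u ∈ halfDiff D, phiStar φ u ≠ ⊥) ∧
    (∀ f : X → ℝ, JCW D φ f → ∀ n k : ℕ, 0 < n → 0 < k → ∀ x ∈ D, ∀ y ∈ D,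
      ((f (((n : ℝ) / ((n : ℝ) + (k : ℝ))) • x +
          ((k : ℝ) / ((n : ℝ) + (k : ℝ))) • y) : ℝ) : EReal) ≤
        (((n : ℝ) / ((n : ℝ) + (k : ℝ)) * f x +
          (k : ℝ) / ((n : ℝ) + (k : ℝ)) * f y : ℝ) : EReal) +
        (((k : ℝ) * (n : ℝ) : ℝ) : EReal) *
          phiStar φ ((1 / ((n : ℝ) + (k : ℝ))) • (x - y))) ∧
    (∀ f : X → ℝ, JCW D φ f → JCW D (phiStarR φ) f) ∧
    Admissible D (phiStarR φ) := by
  obtain ⟨heven, hzero, g, hg⟩ := hφ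
  have htop : ∀ u : X, phiStar φ u ≠ ⊤ := by
    intro u
    exact ne_top_of_le_ne_top (EReal.coe_ne_top _) (iInf_le _ (1 : ℕ+))
  have hkey : ∀ f : X → ℝ, JCW D φ f → ∀ n k : ℕ, 0 < n → 0 < k → ∀ x ∈ D, ∀ y ∈ D,
      ∀ m : ℕ+,
      f (((n : ℝ) / ((n : ℝ) + (k : ℝ))) • x + ((k : ℝ) / ((n : ℝ) + (k : ℝ))) • y) ≤
        (n : ℝ) / ((n : ℝ) + (k : ℝ)) * f x + (k : ℝ) / ((n : ℝ) + (k : ℝ)) * f y +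
        (k : ℝ) * (n : ℝ) * (((m : ℕ) : ℝ) ^ 2 *
          φ ((1 / ((m : ℕ) : ℝ)) • ((1 / ((n : ℝ) + (k : ℝ))) • (x - y)))) :=
    fun f hf n k hn hk x hx y hy m => ratIneq' hD hf n k (m : ℕ) hn hk m.pos hx hy
  -- part 1
  have hbot : ∀ u ∈ halfDiff D, phiStar φ u ≠ ⊥ := by
    intro u hu
    obtain ⟨x, hx, y, hy, rfl⟩ := hu
    have H := fun m : ℕ+ => hkey g hg 1 1 one_pos one_pos x hx y hy m
    simp only [Nat.cast_one, one_mul] at H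
    have h12 : (1 : ℝ) / (1 + 1) = 2⁻¹ := by norm_num
    simp only [h12] at H
    set B : ℝ := g ((2⁻¹ : ℝ) • x + (2⁻¹ : ℝ) • y) - 2⁻¹ * g x - 2⁻¹ * g y with hB
    have hle : ((B : ℝ) : EReal) ≤ phiStar φ ((2⁻¹ : ℝ) • (x - y)) :=
      le_iInf fun m => EReal.coe_le_coe_iff.mpr (by have := H m; rw [hB]; linarith)
    intro hc
    rw [hc, le_bot_iff] at hle
    exact EReal.coe_ne_bot B hle
  -- membership of the scaled difference in halfDiff
  have hhalf : ∀ n k : ℕ, 0 < n → 0 < k → ∀ x ∈ D, ∀ y ∈ D,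
      (1 / ((n : ℝ) + (k : ℝ))) • (x - y) ∈ halfDiff D := by
    intro n k hn hk x hx y hy
    have hNr0 : (0 : ℝ) < (n : ℝ) + (k : ℝ) := by positivity
    have h2 : (2⁻¹ : ℝ) • (x - y) ∈ halfDiff D := ⟨x, hx, y, hy, rfl⟩
    have hN2 : (2 : ℝ) ≤ (n : ℝ) + (k : ℝ) := by
      have : (2 : ℕ) ≤ n + k := by omega
      exact_mod_cast this
    have hmem := smul_mem_halfDiff hD h2 (t := 2 / ((n : ℝ) + (k : ℝ)))
      (by positivity) (by rw [div_le_one hNr0]; exact hN2)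
    have : (2 / ((n : ℝ) + (k : ℝ))) • ((2⁻¹ : ℝ) • (x - y))
        = (1 / ((n : ℝ) + (k : ℝ))) • (x - y) := by
      rw [smul_smul]
      congr 1
      field_simp
    rwa [this] at hmem
  -- main real-valued inequality
  have hmain : ∀ f : X → ℝ, JCW D φ f → ∀ n k : ℕ, 0 < n → 0 < k → ∀ x ∈ D, ∀ y ∈ D,
      f (((n : ℝ) / ((n : ℝ) + (k : ℝ))) • x + ((k : ℝ) / ((n : ℝ) + (k : ℝ))) • y) ≤
        (n : ℝ) / ((n : ℝ) + (k : ℝ)) * f x + (k : ℝ) / ((n : ℝ) + (k : ℝ)) * f y +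
        (k : ℝ) * (n : ℝ) * phiStarR φ ((1 / ((n : ℝ) + (k : ℝ))) • (x - y)) := by
    intro f hf n k hn hk x hx y hy
    have huD := hhalf n k hn hk x hx y hy
    have hcoe : ((phiStarR φ ((1 / ((n : ℝ) + (k : ℝ))) • (x - y)) : ℝ) : EReal)
        = phiStar φ ((1 / ((n : ℝ) + (k : ℝ))) • (x - y)) :=
      EReal.coe_toReal (htop _) (hbot _ huD)
    have hkn : (0 : ℝ) < (k : ℝ) * (n : ℝ) := by
      have hn' : (0:ℝ) < (n:ℝ) := by exact_mod_cast hn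
      have hk' : (0:ℝ) < (k:ℝ) := by exact_mod_cast hk
      positivity
    have hq : ((f (((n : ℝ) / ((n : ℝ) + (k : ℝ))) • x + ((k : ℝ) / ((n : ℝ) + (k : ℝ))) • y)
        - ((n : ℝ) / ((n : ℝ) + (k : ℝ)) * f x + (k : ℝ) / ((n : ℝ) + (k : ℝ)) * f y))
        / ((k : ℝ) * (n : ℝ)) : ℝ)
        ≤ phiStarR φ ((1 / ((n : ℝ) + (k : ℝ))) • (x - y)) := by
      have hEq : (((f (((n : ℝ) / ((n : ℝ) + (k : ℝ))) • x + ((k : ℝ) / ((n : ℝ) + (k : ℝ))) • y)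
          - ((n : ℝ) / ((n : ℝ) + (k : ℝ)) * f x + (k : ℝ) / ((n : ℝ) + (k : ℝ)) * f y))
          / ((k : ℝ) * (n : ℝ)) : ℝ) : EReal) ≤ phiStar φ ((1 / ((n : ℝ) + (k : ℝ))) • (x - y)) :=
        le_iInf fun m => EReal.coe_le_coe_iff.mpr (by
          rw [div_le_iff₀ hkn]
          have := hkey f hf n k hn hk x hx y hy m
          linarith)
      rw [← hcoe] at hEq
      exact_mod_cast hEq
    rw [div_le_iff₀ hkn] at hq
    linarith
  -- part 3
  have hpart3 : ∀ f : X → ℝ, JCW D φ f → JCW D (phiStarR φ) f := by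
    intro f hf x hx y hy
    have H := hmain f hf 1 1 one_pos one_pos x hx y hy
    simp only [Nat.cast_one, one_mul] at H
    have h12 : (1 : ℝ) / (1 + 1) = 2⁻¹ := by norm_num
    simp only [h12] at H
    rw [smul_add]
    linarith
  refine ⟨hbot, ?_, hpart3, ?_, ?_, g, hpart3 g hg⟩
  · intro f hf n k hn hk x hx y hy
    have H := hmain f hf n k hn hk x hx y hy
    have hcoe : ((phiStarR φ ((1 / ((n : ℝ) + (k : ℝ))) • (x - y)) : ℝ) : EReal)
        = phiStar φ ((1 / ((n : ℝ) + (k : ℝ))) • (x - y)) :=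
      EReal.coe_toReal (htop _) (hbot _ (hhalf n k hn hk x hx y hy))
    rw [← hcoe, ← EReal.coe_mul, ← EReal.coe_add]
    exact_mod_cast H
  · -- evenness of phiStarR
    intro u hu
    have hstar : phiStar φ (-u) = phiStar φ u := by
      unfold phiStar
      refine iInf_congr fun m => ?_
      have hm1 : (1 : ℝ) ≤ ((m : ℕ) : ℝ) := by exact_mod_cast m.one_le
      have hmem : (1 / ((m : ℕ) : ℝ)) • u ∈ halfDiff D :=
        smul_mem_halfDiff hD hu (by positivity) (by
          rw [div_le_one (by linarith)]; exact hm1)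
      have hphi : φ ((1 / ((m : ℕ) : ℝ)) • -u) = φ ((1 / ((m : ℕ) : ℝ)) • u) := by
        rw [smul_neg]
        exact heven _ hmem
      rw [hphi]
    rw [phiStarR, phiStarR, hstar]
  · -- phiStarR φ 0 = 0
    have hstar : phiStar φ 0 = 0 := by
      unfold phiStar
      simp [hzero]
    rw [phiStarR, hstar]
    exact EReal.toReal_zero
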